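/- The matrix χ := Σ_{t=1}^{d−1} V σ_z^{(0t)} V⁻¹ equals Σ_{0 ≤ j < k ≤ d−1} σ_x^{(jk)}, i.e. χ = i(J − I) where J is the d×d all-ones matrix and I is the identity. -/

import Mathlib

open scoped Matrix
open Finset

/-- The d×d Fourier matrix V with entries V_{jk} = ω^{jk}/√d, ω = exp(2πi/d). -/
noncomputable def fourierV (d : ℕ) : Matrix (Fin d) (Fin d) ℂ :=
  Matrix.of fun j k =>
    Complex.exp (2 * Real.pi * Complex.I / d) ^ ((j : ℕ) * (k : ℕ)) / (Real.sqrt d : ℂ)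

/-- σ_z^{(jk)} = i(E_{jj} − E_{kk}). -/
noncomputable def sigmaZ {d : ℕ} (j k : Fin d) : Matrix (Fin d) (Fin d) ℂ :=
  Complex.I • (Matrix.single j j 1 - Matrix.single k k 1)

/-- σ_x^{(jk)} = i(E_{jk} + E_{kj}). -/
noncomputable def sigmaX {d : ℕ} (j k : Fin d) : Matrix (Fin d) (Fin d) ℂ :=
  Complex.I • (Matrix.single j k 1 + Matrix.single k j 1)

namespace ChiAux

noncomputable def om (d : ℕ) : ℂ := Complex.exp (2 * Real.pi * Complex.I / d)

noncomputable def Wm (d : ℕ) : Matrix (Fin d) (Fin d) ℂ :=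
  Matrix.of fun j k => (om d ^ ((j : ℕ) * (k : ℕ)))⁻¹ / (Real.sqrt d : ℂ)

variable (d : ℕ) [NeZero d]

lemma prim : IsPrimitiveRoot (om d) d := Complex.isPrimitiveRoot_exp d (NeZero.ne d)

lemma om_ne_zero : om d ≠ 0 := Complex.exp_ne_zero _

lemma key (j k : Fin d) :
    ∑ t : Fin d, om d ^ ((j : ℕ) * (t : ℕ)) * (om d ^ ((t : ℕ) * (k : ℕ)))⁻¹ =
      if j = k then (d : ℂ) else 0 := by
  have hω : om d ≠ 0 := om_ne_zero d
  set ζ : ℂ := om d ^ (j : ℕ) * (om d ^ (k : ℕ))⁻¹ with hζ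
  have hterm : ∀ t : Fin d,
      om d ^ ((j : ℕ) * (t : ℕ)) * (om d ^ ((t : ℕ) * (k : ℕ)))⁻¹ = ζ ^ (t : ℕ) := by
    intro t
    rw [hζ, mul_pow, inv_pow, ← pow_mul, ← pow_mul, Nat.mul_comm (k : ℕ) (t : ℕ)]
  have homd : om d ^ d = 1 := (prim d).pow_eq_one
  have hζd : ζ ^ d = 1 := by
    rw [hζ, mul_pow, inv_pow, ← pow_mul, ← pow_mul, Nat.mul_comm (j : ℕ) d,
      Nat.mul_comm (k : ℕ) d, pow_mul, pow_mul, homd, one_pow, one_pow, inv_one, mul_one]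
  simp_rw [hterm]
  rw [Fin.sum_univ_eq_sum_range (fun n => ζ ^ n) d]
  by_cases hjk : j = k
  · have : ζ = 1 := by
      rw [hζ, hjk, mul_inv_cancel₀ (pow_ne_zero _ hω)]
    simp [this, hjk]
  · have hζ1 : ζ ≠ 1 := by
      intro h
      apply hjk
      have : om d ^ (j : ℕ) = om d ^ (k : ℕ) := by
        rw [hζ] at h
        exact (mul_inv_eq_one₀ (pow_ne_zero _ hω)).mp h
      exact Fin.ext ((prim d).pow_inj j.isLt k.isLt this)
    rw [geom_sum_eq hζ1, hζd, sub_self, zero_div, if_neg hjk]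

lemma sqrt_mul_self : ((Real.sqrt d : ℂ)) * ((Real.sqrt d : ℂ)) = (d : ℂ) := by
  rw [← Complex.ofReal_mul, Real.mul_self_sqrt (Nat.cast_nonneg d)]
  norm_num

lemma d_ne_zero : (d : ℂ) ≠ 0 := Nat.cast_ne_zero.mpr (NeZero.ne d)

lemma VW : fourierV d * Wm d = 1 := by
  ext j k
  rw [Matrix.mul_apply]
  have hsum : ∀ t : Fin d,
      fourierV d j t * Wm d t k =
        om d ^ ((j : ℕ) * (t : ℕ)) * (om d ^ ((t : ℕ) * (k : ℕ)))⁻¹ / (d : ℂ) := by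
    intro t
    simp only [fourierV, Wm, Matrix.of_apply, om]
    rw [div_mul_div_comm, sqrt_mul_self]
  simp_rw [hsum]
  rw [← Finset.sum_div, key, Matrix.one_apply]
  by_cases hjk : j = k <;> simp [hjk, d_ne_zero d]

lemma inv_eq : (fourierV d)⁻¹ = Wm d := Matrix.inv_eq_right_inv (VW d)

lemma sandwich (a : Fin d) (j k : Fin d) :
    (fourierV d * Matrix.single a a (1 : ℂ) * Wm d) j k =
      fourierV d j a * Wm d a k := by
  rw [Matrix.mul_assoc, Matrix.mul_apply]
  rw [Finset.sum_eq_single a]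
  · rw [Matrix.single_mul_apply_same, one_mul]
  · intro b _ hb
    rw [Matrix.single_mul_apply_of_ne _ _ _ _ _ hb, mul_zero]
  · simp

end ChiAux

open ChiAux in
/-- χ = Σ_{t=1}^{d−1} V σ_z^{(0t)} V⁻¹ equals Σ_{0 ≤ j < k ≤ d−1} σ_x^{(jk)},
    i.e. χ = i(J − I) with J the all-ones matrix. -/
theorem chi_eq_sum_sigmaX (d : ℕ) [NeZero d] :
    (∑ t ∈ univ.filter (fun t : Fin d => 1 ≤ (t : ℕ)),
        fourierV d * sigmaZ (0 : Fin d) t * (fourierV d)⁻¹) =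
      (∑ p ∈ univ.filter (fun p : Fin d × Fin d => p.1 < p.2), sigmaX p.1 p.2) ∧
    (∑ t ∈ univ.filter (fun t : Fin d => 1 ≤ (t : ℕ)),
        fourierV d * sigmaZ (0 : Fin d) t * (fourierV d)⁻¹) =
      Complex.I • ((Matrix.of fun _ _ : Fin d => (1 : ℂ)) - 1) := by
  have hd : (d : ℂ) ≠ 0 := d_ne_zero d
  -- the filter over Fin d with 1 ≤ t is univ.erase 0
  have hfilter : (univ.filter (fun t : Fin d => 1 ≤ (t : ℕ))) = univ.erase (0 : Fin d) := by
    ext t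
    simp only [mem_filter, mem_univ, true_and, mem_erase, ne_eq, Nat.one_le_iff_ne_zero, and_true]
    exact not_congr (Fin.val_eq_zero_iff (n := d) (a := t))
  -- entrywise value of the LHS
  have hLHS : ∀ j k : Fin d,
      (∑ t ∈ univ.filter (fun t : Fin d => 1 ≤ (t : ℕ)),
        fourierV d * sigmaZ (0 : Fin d) t * (fourierV d)⁻¹) j k =
      Complex.I * (1 - if j = k then 1 else 0) := by
    intro j k
    rw [inv_eq d, Matrix.sum_apply]
    have hterm : ∀ t : Fin d,
        (fourierV d * sigmaZ (0 : Fin d) t * Wm d) j k =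
          Complex.I * (fourierV d j 0 * Wm d 0 k - fourierV d j t * Wm d t k) := by
      intro t
      have : fourierV d * sigmaZ (0 : Fin d) t * Wm d =
          Complex.I • (fourierV d * Matrix.single (0 : Fin d) (0 : Fin d) (1:ℂ) * Wm d
            - fourierV d * Matrix.single t t (1:ℂ) * Wm d) := by
        rw [sigmaZ, Matrix.mul_smul, Matrix.smul_mul, Matrix.mul_sub, Matrix.sub_mul]
      rw [this, Matrix.smul_apply, Matrix.sub_apply, sandwich, sandwich, smul_eq_mul]
    simp_rw [hterm]
    rw [← Finset.mul_sum, hfilter]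
    have h00 : fourierV d j 0 * Wm d 0 k = 1 / (d : ℂ) := by
      simp only [fourierV, Wm, Matrix.of_apply, om]
      simp only [Fin.val_zero, Nat.mul_zero, Nat.zero_mul, pow_zero, inv_one]
      rw [div_mul_div_comm, one_mul, sqrt_mul_self]
    have hall : ∑ t : Fin d, fourierV d j t * Wm d t k =
        (if j = k then (d : ℂ) else 0) / (d : ℂ) := by
      have : ∀ t : Fin d, fourierV d j t * Wm d t k =
          om d ^ ((j : ℕ) * (t : ℕ)) * (om d ^ ((t : ℕ) * (k : ℕ)))⁻¹ / (d : ℂ) := by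
        intro t
        simp only [fourierV, Wm, Matrix.of_apply, om]
        rw [div_mul_div_comm, sqrt_mul_self]
      simp_rw [this]
      rw [← Finset.sum_div, key]
    have herase : ∑ t ∈ univ.erase (0 : Fin d), fourierV d j t * Wm d t k =
        (if j = k then (d : ℂ) else 0) / (d : ℂ) - 1 / (d : ℂ) := by
      rw [← hall, ← h00]
      rw [← Finset.add_sum_erase univ _ (mem_univ (0 : Fin d))]
      ring
    rw [Finset.sum_sub_distrib, Finset.sum_const, herase]
    have hcard : (univ.erase (0 : Fin d)).card = d - 1 := by
      rw [Finset.card_erase_of_mem (mem_univ _), Finset.card_univ, Fintype.card_fin]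
    rw [hcard, h00]
    have hd1 : ((d - 1 : ℕ) : ℂ) = (d : ℂ) - 1 := by
      have := Nat.one_le_iff_ne_zero.mpr (NeZero.ne d)
      push_cast [this]
      ring
    rw [nsmul_eq_mul, hd1]
    by_cases hjk : j = k
    · simp only [hjk, if_true]
      field_simp
      ring
    · simp only [if_neg hjk]
      field_simp
      ring
  constructor
  · ext j k
    rw [hLHS j k, Matrix.sum_apply]
    have hterm : ∀ p : Fin d × Fin d,
        sigmaX p.1 p.2 j k = Complex.I *
          ((if p = (j, k) then (1:ℂ) else 0) + (if p = (k, j) then (1:ℂ) else 0)) := by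
      intro p
      rw [sigmaX, Matrix.smul_apply, Matrix.add_apply, smul_eq_mul]
      congr 2
      · rw [Matrix.single]
        simp [Prod.ext_iff, and_comm]
      · rw [Matrix.single]
        simp [Prod.ext_iff, and_comm]
    simp_rw [hterm]
    rw [← Finset.mul_sum, Finset.sum_add_distrib, Finset.sum_ite_eq' , Finset.sum_ite_eq']
    simp only [Finset.mem_filter, Finset.mem_univ, true_and]
    rcases lt_trichotomy j k with h | h | h
    · simp [h, not_lt_of_gt h, Fin.lt_iff_val_lt_val, h.ne]
    · simp [h, lt_irrefl]
    · simp [h, not_lt_of_gt h, (Fin.lt_iff_val_lt_val).mp h, h.ne']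
  · ext j k
    rw [hLHS j k]
    rw [Matrix.smul_apply, Matrix.sub_apply, Matrix.of_apply, Matrix.one_apply, smul_eq_mul]
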